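/- Let F be a closure system on a finite set G. The number of meet-irreducible elements of the lattice of closure systems contained in F equals the number of covering pairs (A,B) in the lattice (F, ⊆). -/

import Mathlib

variable {α : Type*}

/-- A closure system on (the universe of) `α`: contains the full set and is
closed under (nonempty) intersections. -/
def IsClosureSystem (F : Set (Set α)) : Prop :=
  Set.univ ∈ F ∧ ∀ S ⊆ F, S.Nonempty → ⋂₀ S ∈ F

/-- `R` is a closure system contained in `F` (an element of the ideal `↓F`). -/
def DownF (F R : Set (Set α)) : Prop := IsClosureSystem R ∧ R ⊆ F

/-- Models of the implication `A → B`. -/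
def FAB (A B : Set α) : Set (Set α) := {D | ¬ A ⊆ D ∨ B ⊆ D}

/-- Closure operator of a closure system `R`. -/
def clOp (R : Set (Set α)) (X : Set α) : Set α := ⋂₀ {D | D ∈ R ∧ X ⊆ D}

/-- The closure system contained in `F` generated by the family `X`. -/
def genCS (F X : Set (Set α)) : Set (Set α) :=
  ⋂₀ {T | IsClosureSystem T ∧ T ⊆ F ∧ X ⊆ T}

/-- `R'` is covered by `R` in the lattice `↓F` of closure systems contained in `F`. -/
def CoversIn (F R' R : Set (Set α)) : Prop :=
  DownF F R' ∧ DownF F R ∧ R' ⊂ R ∧ ¬ ∃ T, DownF F T ∧ R' ⊂ T ∧ T ⊂ R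

/-- `A` is covered by `B` in the lattice `(F, ⊆)`. -/
def CoversF (F : Set (Set α)) (A B : Set α) : Prop :=
  A ∈ F ∧ B ∈ F ∧ A ⊂ B ∧ ¬ ∃ C ∈ F, A ⊂ C ∧ C ⊂ B

/-- `A` is meet-irreducible in the lattice `(R, ⊆)` of a closure system `R`. -/
def MeetIrredSet (R : Set (Set α)) (A : Set α) : Prop :=
  A ∈ R ∧ A ≠ Set.univ ∧ ¬ ∃ B ∈ R, ∃ C ∈ R, A ⊂ B ∧ A ⊂ C ∧ A = B ∩ C

/-- `R` is meet-irreducible in the lattice `↓F`. -/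
def MeetIrredDown (F R : Set (Set α)) : Prop :=
  DownF F R ∧ R ≠ F ∧ ¬ ∃ T, DownF F T ∧ ∃ U, DownF F U ∧ R ⊂ T ∧ R ⊂ U ∧ R = T ∩ U

/-- `R` is join-irreducible in the lattice `↓F` (bottom is `{univ}`,
join of a family is the generated closure system). -/
def JoinIrredDown (F R : Set (Set α)) : Prop :=
  DownF F R ∧ R ≠ {Set.univ} ∧
    ∀ Y : Set (Set (Set α)), Y.Finite → (∀ T ∈ Y, DownF F T) →
      R = genCS F (⋃₀ Y) → R ∈ Y

section Aux

variable {F R T U W : Set (Set α)} {A B C D X : Set α}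

lemma cs_pair_inter (h : IsClosureSystem R) (hX : X ∈ R) (hD : D ∈ R) :
    X ∩ D ∈ R := by
  have h2 := h.2 {X, D} (by
    intro Z hZ
    rcases Set.mem_insert_iff.1 hZ with rfl | hZ'
    · exact hX
    · rw [Set.mem_singleton_iff.1 hZ']; exact hD) ⟨X, by simp⟩
  simpa [Set.sInter_pair] using h2

lemma downF_FAB (hF : IsClosureSystem F) (A B : Set α) : DownF F (F ∩ FAB A B) := by
  refine ⟨⟨⟨hF.1, Or.inr (Set.subset_univ B)⟩, ?_⟩, Set.inter_subset_left⟩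
  intro S hS hne
  refine ⟨hF.2 S (hS.trans Set.inter_subset_left) hne, ?_⟩
  by_cases hA : A ⊆ ⋂₀ S
  · refine Or.inr (Set.subset_sInter fun D hD => ?_)
    rcases (hS hD).2 with hc | hc
    · exact absurd (hA.trans (Set.sInter_subset_of_mem hD)) hc
    · exact hc
  · exact Or.inl hA

lemma clOp_mem (h : IsClosureSystem R) (X : Set α) : clOp R X ∈ R :=
  h.2 _ (fun D hD => hD.1) ⟨Set.univ, h.1, Set.subset_univ X⟩

lemma subset_clOp (R : Set (Set α)) (X : Set α) : X ⊆ clOp R X :=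
  Set.subset_sInter fun _ hD => hD.2

lemma clOp_subset (hD : D ∈ R) (hXD : X ⊆ D) : clOp R X ⊆ D :=
  Set.sInter_subset_of_mem ⟨hD, hXD⟩

lemma genCS_downF (hF : IsClosureSystem F) {Y : Set (Set α)} (hY : Y ⊆ F) :
    DownF F (genCS F Y) := by
  refine ⟨⟨Set.mem_sInter.2 fun T hT => hT.1.1, ?_⟩,
    Set.sInter_subset_of_mem ⟨hF, subset_rfl, hY⟩⟩
  intro S hS hne
  exact Set.mem_sInter.2 fun T hT =>
    hT.1.2 S (hS.trans (Set.sInter_subset_of_mem hT)) hne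

lemma subset_genCS (F Y : Set (Set α)) : Y ⊆ genCS F Y :=
  Set.subset_sInter fun _ hT => hT.2.2

lemma genCS_subset {Y : Set (Set α)} (hT : IsClosureSystem T) (hTF : T ⊆ F)
    (hYT : Y ⊆ T) : genCS F Y ⊆ T := Set.sInter_subset_of_mem ⟨hT, hTF, hYT⟩

lemma fab_self_not_mem (hAB : A ⊂ B) : A ∉ F ∩ FAB A B := by
  rintro ⟨-, hc | hc⟩
  · exact hc subset_rfl
  · exact hAB.not_subset hc

lemma downF_insert_min (hF : IsClosureSystem F) (hR : DownF F R) (hA : A ∈ F)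
    (hAR : A ∉ R) (hmin : ∀ E ∈ F, E ∉ R → E ⊆ A → E = A) :
    DownF F (insert A R) := by
  have hpair : ∀ X ∈ R, A ∩ X ∈ insert A R := by
    intro X hX
    have hAXF : A ∩ X ∈ F := cs_pair_inter hF hA (hR.2 hX)
    by_cases hmem : A ∩ X ∈ R
    · exact Set.mem_insert_iff.2 (Or.inr hmem)
    · have hEq := hmin _ hAXF hmem Set.inter_subset_left
      rw [hEq]; exact Set.mem_insert _ _
  refine ⟨⟨Set.mem_insert_iff.2 (Or.inr hR.1.1), ?_⟩, ?_⟩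
  · intro S hS hne
    by_cases hAS : A ∈ S
    · have hrest : S \ {A} ⊆ R := by
        intro Z hZ
        rcases Set.mem_insert_iff.1 (hS hZ.1) with rfl | hZR
        · exact absurd rfl hZ.2
        · exact hZR
      have hSeq : ⋂₀ S = A ∩ ⋂₀ (S \ {A}) := by
        rw [← Set.sInter_insert, Set.insert_diff_singleton, Set.insert_eq_self.2 hAS]
      rcases Set.eq_empty_or_nonempty (S \ {A}) with hemp | hne'
      · have hSA : S = {A} := by
          refine Set.eq_singleton_iff_unique_mem.2 ⟨hAS, fun x hx => ?_⟩
          by_contra hne''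
          exact (Set.eq_empty_iff_forall_notMem.1 hemp) x ⟨hx, hne''⟩
        rw [hSA, Set.sInter_singleton]; exact Set.mem_insert _ _
      · have hint : ⋂₀ (S \ {A}) ∈ R := hR.1.2 _ hrest hne'
        rw [hSeq]; exact hpair _ hint
    · have hSR : S ⊆ R := fun Z hZ =>
        (Set.mem_insert_iff.1 (hS hZ)).resolve_left (by rintro rfl; exact hAS hZ)
      exact Set.mem_insert_iff.2 (Or.inr (hR.1.2 S hSR hne))
  · intro Z hZ
    rcases Set.mem_insert_iff.1 hZ with rfl | hZR
    · exact hA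
    · exact hR.2 hZR

lemma covers_meetIrred (hF : IsClosureSystem F) (h : CoversF F A B) :
    MeetIrredDown F (F ∩ FAB A B) := by
  obtain ⟨hAF, hBF, hAB, hno⟩ := h
  have hAnot : A ∉ F ∩ FAB A B := fab_self_not_mem hAB
  have hBmem : B ∈ F ∩ FAB A B := ⟨hBF, Or.inr subset_rfl⟩
  have key : ∀ T, DownF F T → F ∩ FAB A B ⊂ T → A ∈ T := by
    intro T hT hsub
    obtain ⟨D, hDT, hDR⟩ := Set.exists_of_ssubset hsub
    have hDF : D ∈ F := hT.2 hDT
    have hD2 : A ⊆ D ∧ ¬ B ⊆ D := by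
      by_contra hc
      push_neg at hc
      apply hDR
      refine ⟨hDF, ?_⟩
      by_cases hAD : A ⊆ D
      · exact Or.inr (hc hAD)
      · exact Or.inl hAD
    have hDBmem : D ∩ B ∈ T := cs_pair_inter hT.1 hDT (hsub.1 hBmem)
    have hADB : A ⊆ D ∩ B := Set.subset_inter hD2.1 hAB.1
    by_cases heq : D ∩ B = A
    · rwa [heq] at hDBmem
    · exfalso
      apply hno
      refine ⟨D ∩ B, cs_pair_inter hF hDF hBF,
        Set.ssubset_iff_subset_ne.2 ⟨hADB, fun hc2 => heq hc2.symm⟩,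
        Set.ssubset_iff_subset_ne.2 ⟨Set.inter_subset_right, fun hc2 => ?_⟩⟩
      exact hD2.2 (hc2 ▸ Set.inter_subset_left)
  refine ⟨downF_FAB hF A B, ?_, ?_⟩
  · intro hEq
    exact hAnot (by rw [hEq]; exact hAF)
  · rintro ⟨T, hT, U, hU, hRT, hRU, hEq⟩
    rw [hEq] at hAnot
    exact hAnot ⟨key T hT (hEq ▸ hRT), key U hU (hEq ▸ hRU)⟩

lemma meetIrred_exists [Finite α] (hF : IsClosureSystem F)
    (h : MeetIrredDown F R) : ∃ A B, CoversF F A B ∧ R = F ∩ FAB A B := by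
  obtain ⟨hR, hRne, hirr⟩ := h
  have hne : (F \ R).Nonempty := by
    obtain ⟨D, hDF, hDR⟩ := Set.exists_of_ssubset (Set.ssubset_iff_subset_ne.2 ⟨hR.2, hRne⟩)
    exact ⟨D, hDF, hDR⟩
  obtain ⟨A, hAmem, hAmin⟩ :=
    (by
      obtain ⟨A, hA, hmin⟩ := (Set.toFinite (F \ R)).exists_minimalFor id (F \ R) hne
      exact ⟨A, hA, fun E hE hEA => Set.Subset.antisymm (hmin hE hEA) hEA⟩ :
      ∃ A ∈ F \ R, ∀ E ∈ F \ R, E ⊆ A → A = E)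
  have hAF : A ∈ F := hAmem.1
  have hAR : A ∉ R := hAmem.2
  have hT : DownF F (insert A R) := downF_insert_min hF hR hAF hAR
    (fun E hEF hER hEA => (hAmin E ⟨hEF, hER⟩ hEA).symm)
  have hRT : R ⊂ insert A R := Set.ssubset_iff_subset_ne.2
    ⟨Set.subset_insert A R, fun hEq => hAR (by rw [hEq]; exact Set.mem_insert A R)⟩
  set B := clOp R A with hBdef
  have hBR : B ∈ R := clOp_mem hR.1 A
  have hABs : A ⊆ B := subset_clOp R A
  have hABne : A ≠ B := fun hEq => hAR (hEq ▸ hBR)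
  have hASB : A ⊂ B := Set.ssubset_iff_subset_ne.2 ⟨hABs, hABne⟩
  -- generic contradiction maker
  have contra : ∀ D ∈ F, D ∉ R → ∀ W : Set (Set α), DownF F W → R ⊆ W →
      D ∈ W → A ∉ W → False := by
    intro D hDF hDR W hW hRW hDW hAW
    have hUd : DownF F (genCS F (insert D R)) :=
      genCS_downF hF (Set.insert_subset hDF hR.2)
    have hRU : R ⊂ genCS F (insert D R) := by
      refine Set.ssubset_iff_subset_ne.2
        ⟨(Set.subset_insert D R).trans (subset_genCS F _), fun hEq => ?_⟩
      exact hDR (by rw [hEq]; exact subset_genCS F _ (Set.mem_insert D R))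
    have hAU : A ∉ genCS F (insert D R) := fun hA =>
      hAW (genCS_subset hW.1 hW.2 (Set.insert_subset hDW hRW) hA)
    apply hirr
    refine ⟨insert A R, hT, genCS F (insert D R), hUd, hRT, hRU, ?_⟩
    ext x
    constructor
    · exact fun hx => ⟨Set.subset_insert A R hx, hRU.1 hx⟩
    · rintro ⟨hx1, hx2⟩
      rcases Set.mem_insert_iff.1 hx1 with rfl | hx
      · exact absurd hx2 hAU
      · exact hx
  have hRsub : ∀ C : Set α, C ⊆ B → R ⊆ F ∩ FAB A C := by
    intro C hCB X hX
    refine ⟨hR.2 hX, ?_⟩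
    by_cases hAX : A ⊆ X
    · exact Or.inr (hCB.trans (clOp_subset hX hAX))
    · exact Or.inl hAX
  have star : ∀ D ∈ F, D ∉ R → A ⊆ D ∧ ¬ B ⊆ D := by
    intro D hDF hDR
    by_contra hc
    push_neg at hc
    have hDfab : D ∈ FAB A B := by
      by_cases hAD : A ⊆ D
      · exact Or.inr (hc hAD)
      · exact Or.inl hAD
    exact contra D hDF hDR _ (downF_FAB hF A B) (hRsub B subset_rfl)
      ⟨hDF, hDfab⟩ (fab_self_not_mem hASB)
  have hcov : CoversF F A B := by
    refine ⟨hAF, hR.2 hBR, hASB, ?_⟩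
    rintro ⟨C, hCF, hAC, hCB⟩
    by_cases hCR : C ∈ R
    · exact hCB.not_subset (clOp_subset hCR hAC.subset)
    · exact contra C hCF hCR _ (downF_FAB hF A C) (hRsub C hCB.subset)
        ⟨hCF, Or.inr subset_rfl⟩ (fab_self_not_mem hAC)
  refine ⟨A, B, hcov, Set.Subset.antisymm (hRsub B subset_rfl) ?_⟩
  rintro D ⟨hDF, hfab⟩
  by_contra hDR
  obtain ⟨hAD, hBD⟩ := star D hDF hDR
  rcases hfab with hc | hc
  · exact hc hAD
  · exact hBD hc

end Aux

/-- the number of meet-irreducibles of ↓F equals the number of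
covering pairs of (F,⊆). -/
theorem stmt_9 {α : Type*} [Fintype α] (F : Set (Set α)) (hF : IsClosureSystem F) :
    {R : Set (Set α) | MeetIrredDown F R}.ncard =
      {p : Set α × Set α | CoversF F p.1 p.2}.ncard := by
  have himg : {R : Set (Set α) | MeetIrredDown F R} =
      (fun p : Set α × Set α => F ∩ FAB p.1 p.2) '' {p | CoversF F p.1 p.2} := by
    ext R
    simp only [Set.mem_setOf_eq, Set.mem_image]
    constructor
    · intro h
      obtain ⟨A, B, hcov, hEq⟩ := meetIrred_exists hF h
      exact ⟨(A, B), hcov, hEq.symm⟩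
    · rintro ⟨⟨A, B⟩, hcov, rfl⟩
      exact covers_meetIrred hF hcov
  rw [himg]
  apply Set.ncard_image_of_injOn
  rintro ⟨A, B⟩ h1 ⟨A', B'⟩ h2 hEq
  simp only [Set.mem_setOf_eq] at h1 h2
  dsimp only at hEq
  have hAn : A ∉ F ∩ FAB A' B' := by
    rw [← hEq]; exact fab_self_not_mem h1.2.2.1
  have hA'n : A' ∉ F ∩ FAB A B := by
    rw [hEq]; exact fab_self_not_mem h2.2.2.1
  have hA1 : A' ⊆ A ∧ ¬ B' ⊆ A := by
    by_contra hc
    push_neg at hc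
    apply hAn
    refine ⟨h1.1, ?_⟩
    by_cases hAD : A' ⊆ A
    · exact Or.inr (hc hAD)
    · exact Or.inl hAD
  have hA2 : A ⊆ A' ∧ ¬ B ⊆ A' := by
    by_contra hc
    push_neg at hc
    apply hA'n
    refine ⟨h2.1, ?_⟩
    by_cases hAD : A ⊆ A'
    · exact Or.inr (hc hAD)
    · exact Or.inl hAD
  have hAA : A = A' := Set.Subset.antisymm hA2.1 hA1.1
  have hBmem : B ∈ F ∩ FAB A' B' := by
    rw [← hEq]; exact ⟨h1.2.1, Or.inr subset_rfl⟩
  have hB'mem : B' ∈ F ∩ FAB A B := by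
    rw [hEq]; exact ⟨h2.2.1, Or.inr subset_rfl⟩
  have hB1 : B' ⊆ B := by
    rcases hBmem.2 with hc | hc
    · exact absurd (hAA ▸ h1.2.2.1.subset) hc
    · exact hc
  have hB2 : B ⊆ B' := by
    rcases hB'mem.2 with hc | hc
    · exact absurd (hAA ▸ h2.2.2.1.subset) hc
    · exact hc
  have hBB : B = B' := Set.Subset.antisymm hB2 hB1
  simp [Prod.ext_iff, hAA, hBB]
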